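/- With the acoustic geometry setup below, the spatial components of L satisfy, for each i ∈ {1,2,3}: L(Lⁱ) = c^{−1}(Lc)·Lⁱ − c·ĝ^{iβ}∂_βc on U, where ĝ^{αβ} := g^{αβ} + (2μ)^{−1}(L^αL̄^β + L̄^αL^β). -/

import Mathlib

noncomputable section

open scoped BigOperators

/-- Points of ℝ⁴ with coordinates (x⁰,x¹,x²,x³) = (t,x¹,x²,x³). -/
abbrev Pt : Type := Fin 4 → ℝ

/-- Partial derivative ∂_α f. -/
def pd (f : Pt → ℝ) (α : Fin 4) (x : Pt) : ℝ :=
  fderiv ℝ f x (Pi.single α 1)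

/-- The acoustic metric g = diag(−c², 1, 1, 1). -/
def gMat (c : Pt → ℝ) (α β : Fin 4) (x : Pt) : ℝ :=
  if α = β then (if α = 0 then -(c x) ^ 2 else 1) else 0

/-- The inverse metric g⁻¹ = diag(−c⁻², 1, 1, 1). -/
def gInv (c : Pt → ℝ) (α β : Fin 4) (x : Pt) : ℝ :=
  if α = β then (if α = 0 then -((c x) ^ 2)⁻¹ else 1) else 0

/-- Vf = V^α ∂_α f. -/
def vApp (V : Pt → Fin 4 → ℝ) (f : Pt → ℝ) (x : Pt) : ℝ :=
  ∑ α, V x α * pd f α x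

/-- g(V, W) = g_{αβ} V^α W^β. -/
def gPair (c : Pt → ℝ) (V W : Pt → Fin 4 → ℝ) (x : Pt) : ℝ :=
  ∑ α, ∑ β, gMat c α β x * V x α * W x β

/-- L̂^α = −g^{αβ}∂_β u. -/
def Lhat (c u : Pt → ℝ) (x : Pt) (α : Fin 4) : ℝ :=
  -∑ β, gInv c α β x * pd u β x

/-- The inverse foliation density μ = 1/(c⁻²∂_t u). -/
def invDens (c u : Pt → ℝ) (x : Pt) : ℝ :=
  (((c x) ^ 2)⁻¹ * pd u 0 x)⁻¹

/-- L = μ L̂  (so L⁰ = 1). -/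
def Lvec (c u : Pt → ℝ) (x : Pt) (α : Fin 4) : ℝ :=
  invDens c u x * Lhat c u x α

/-- T̂ = c⁻¹(∂_t − L). -/
def That (c u : Pt → ℝ) (x : Pt) (α : Fin 4) : ℝ :=
  (c x)⁻¹ * ((if α = 0 then 1 else 0) - Lvec c u x α)

/-- T = c⁻¹ μ T̂. -/
def Tvec (c u : Pt → ℝ) (x : Pt) (α : Fin 4) : ℝ :=
  (c x)⁻¹ * invDens c u x * That c u x α

/-- L̄ = c⁻²μ L + 2T. -/
def Lbar (c u : Pt → ℝ) (x : Pt) (α : Fin 4) : ℝ :=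
  ((c x) ^ 2)⁻¹ * invDens c u x * Lvec c u x α + 2 * Tvec c u x α

/-- The induced inverse metric ĝ^{αβ} = g^{αβ} + (2μ)⁻¹(L^αL̄^β + L̄^αL^β). -/
def ghat (c u : Pt → ℝ) (α β : Fin 4) (x : Pt) : ℝ :=
  gInv c α β x + (2 * invDens c u x)⁻¹ *
    (Lvec c u x α * Lbar c u x β + Lbar c u x α * Lvec c u x β)


section TransportAux

set_option maxHeartbeats 3000000

private lemma pd_eqOn_zero {f : Pt → ℝ} {U : Set Pt} (hU : IsOpen U) (hf : ∀ y ∈ U, f y = 0)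
    {x : Pt} (hx : x ∈ U) (α : Fin 4) : pd f α x = 0 := by
  have h : f =ᶠ[nhds x] fun _ => (0:ℝ) :=
    Filter.eventually_of_mem (hU.mem_nhds hx) hf
  rw [pd, h.fderiv_eq]
  simp

private lemma pd_add {f g : Pt → ℝ} {x : Pt} (hf : DifferentiableAt ℝ f x)
    (hg : DifferentiableAt ℝ g x) (α : Fin 4) :
    pd (fun y => f y + g y) α x = pd f α x + pd g α x := by
  simp [pd, fderiv_fun_add hf hg]

private lemma pd_neg {f : Pt → ℝ} {x : Pt} (α : Fin 4) :
    pd (fun y => -f y) α x = -pd f α x := by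
  simp [pd, fderiv_neg]

private lemma pd_mul {f g : Pt → ℝ} {x : Pt} (hf : DifferentiableAt ℝ f x)
    (hg : DifferentiableAt ℝ g x) (α : Fin 4) :
    pd (fun y => f y * g y) α x = pd f α x * g x + f x * pd g α x := by
  simp only [pd, fderiv_fun_mul hf hg, ContinuousLinearMap.add_apply,
    ContinuousLinearMap.smul_apply, smul_eq_mul]
  ring

private lemma pd_inv {f : Pt → ℝ} {x : Pt} (hf : DifferentiableAt ℝ f x) (h0 : f x ≠ 0)
    (α : Fin 4) :
    pd (fun y => (f y)⁻¹) α x = -pd f α x / f x ^ 2 := by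
  have h : HasFDerivAt (fun y => (f y)⁻¹)
      ((ContinuousLinearMap.smulRight (1 : ℝ →L[ℝ] ℝ) (-(f x ^ 2)⁻¹)).comp (fderiv ℝ f x)) x :=
    (hasFDerivAt_inv h0).comp x hf.hasFDerivAt
  rw [pd, h.fderiv]
  simp [pd]
  ring

private lemma diff_pd {u : Pt → ℝ} {x : Pt} (hu : ContDiffAt ℝ (⊤ : ℕ∞) u x) (β : Fin 4) :
    DifferentiableAt ℝ (pd u β) x := by
  have hd : DifferentiableAt ℝ (fderiv ℝ u) x :=
    (hu.fderiv_right (m := 1) (by exact WithTop.coe_le_coe.mpr le_top)).differentiableAt one_ne_zero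
  have : pd u β = fun y => (ContinuousLinearMap.apply ℝ ℝ (Pi.single β 1)) (fderiv ℝ u y) := rfl
  rw [this]
  exact (ContinuousLinearMap.apply ℝ ℝ (Pi.single β 1)).differentiableAt.comp x hd

private lemma pd_pd {u : Pt → ℝ} {x : Pt} (hd : DifferentiableAt ℝ (fderiv ℝ u) x) (α β : Fin 4) :
    pd (pd u β) α x = fderiv ℝ (fderiv ℝ u) x (Pi.single α 1) (Pi.single β 1) := by
  have h0 := ((ContinuousLinearMap.apply ℝ ℝ (Pi.single β 1)).hasFDerivAt
      (x := fderiv ℝ u x)).comp x hd.hasFDerivAt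
  have h : HasFDerivAt (fun y => fderiv ℝ u y (Pi.single β 1))
      ((ContinuousLinearMap.apply ℝ ℝ (Pi.single β 1)).comp (fderiv ℝ (fderiv ℝ u) x)) x := by
    simpa [Function.comp_def, ContinuousLinearMap.apply_apply] using h0
  show fderiv ℝ (fun y => fderiv ℝ u y (Pi.single β 1)) x (Pi.single α 1) = _
  rw [h.fderiv]
  simp

private lemma pd_symm {u : Pt → ℝ} {x : Pt} (hu : ContDiffAt ℝ (⊤ : ℕ∞) u x) (α β : Fin 4) :
    pd (pd u β) α x = pd (pd u α) β x := by
  have hd : DifferentiableAt ℝ (fderiv ℝ u) x :=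
    (hu.fderiv_right (m := 1) (by exact WithTop.coe_le_coe.mpr le_top)).differentiableAt one_ne_zero
  rw [pd_pd hd, pd_pd hd]
  exact hu.isSymmSndFDerivAt (by rw [minSmoothness_of_isRCLikeNormedField]; exact WithTop.coe_le_coe.mpr le_top) _ _

end TransportAux

set_option maxHeartbeats 3000000 in

/-- Equation (2.42) of Lemma 2.10: the transport equation
LLⁱ = c⁻¹(Lc)Lⁱ − c ĝ^{iβ}∂_βc for the spatial components of L. -/
theorem transport_equation_of_Li
    (U : Set Pt) (hU : IsOpen U) (c u : Pt → ℝ)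
    (hc : ContDiffOn ℝ (⊤ : ℕ∞) c U) (hcpos : ∀ x ∈ U, 0 < c x)
    (hu : ContDiffOn ℝ (⊤ : ℕ∞) u U)
    (heik : ∀ x ∈ U, ∑ α, ∑ β, gInv c α β x * pd u α x * pd u β x = 0)
    (hut : ∀ x ∈ U, 0 < pd u 0 x) :
    ∀ x ∈ U, ∀ i : Fin 4, i ≠ 0 →
      vApp (Lvec c u) (fun y => Lvec c u y i) x
        = (c x)⁻¹ * vApp (Lvec c u) c x * Lvec c u x i
          - c x * ∑ β, ghat c u i β x * pd c β x := by
  intro x hx i hi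
  have hcx : ContDiffAt ℝ (⊤ : ℕ∞) c x := hc.contDiffAt (hU.mem_nhds hx)
  have hux : ContDiffAt ℝ (⊤ : ℕ∞) u x := hu.contDiffAt (hU.mem_nhds hx)
  have hC : c x ≠ 0 := ne_of_gt (hcpos x hx)
  have hP0 : pd u 0 x ≠ 0 := ne_of_gt (hut x hx)
  have hcd : DifferentiableAt ℝ c x :=
    hcx.differentiableAt (by simp)
  have hψ : ∀ β, DifferentiableAt ℝ (pd u β) x := diff_pd hux
  have hc2ne : c x ^ 2 ≠ 0 := pow_ne_zero 2 hC
  -- pointwise formulas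
  have hmu : ∀ y : Pt, invDens c u y = (c y) ^ 2 * (pd u 0 y)⁻¹ := by
    intro y; rw [invDens, mul_inv, inv_inv]
  have hLhat : ∀ (y : Pt) (β : Fin 4), β ≠ 0 → Lhat c u y β = -pd u β y := by
    intro y β hβ
    have h : ∑ γ, gInv c β γ y * pd u γ y = pd u β y := by
      rw [Finset.sum_eq_single β]
      · simp [gInv, hβ]
      · intro γ _ hγ
        simp [gInv, Ne.symm hγ]
      · simp
    simp [Lhat, h]
  have hLfun : ∀ (y : Pt) (β : Fin 4), β ≠ 0 →
      Lvec c u y β = -((c y) ^ 2 * ((pd u 0 y)⁻¹ * pd u β y)) := by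
    intro y β hβ
    rw [Lvec, hmu, hLhat y β hβ]; ring
  have hL0v : Lvec c u x 0 = 1 := by
    have h0 : Lhat c u x 0 = ((c x) ^ 2)⁻¹ * pd u 0 x := by
      simp [Lhat, gInv, Fin.sum_univ_four]
    rw [Lvec, hmu, h0]
    field_simp
  have hL1v := hLfun x 1 (by decide)
  have hL2v := hLfun x 2 (by decide)
  have hL3v := hLfun x 3 (by decide)
  have hLiv := hLfun x i hi
  -- derivative of squared sound speed
  have hc2 : ∀ β, pd (fun y => (c y) ^ 2) β x = pd c β x * c x + c x * pd c β x := by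
    intro β
    have hfe : (fun y => (c y) ^ 2) = fun y => c y * c y := by funext y; ring
    rw [hfe]; exact pd_mul hcd hcd β
  -- eikonal equation as a function identity
  have hG0 : ∀ y ∈ U,
      -((c y ^ 2)⁻¹ * (pd u 0 y * pd u 0 y)) +
        (pd u 1 y * pd u 1 y + (pd u 2 y * pd u 2 y + pd u 3 y * pd u 3 y)) = 0 := by
    intro y hy
    have h := heik y hy
    simp [gInv, Fin.sum_univ_four] at h
    linear_combination h
  -- differentiability of building blocks
  have hA : DifferentiableAt ℝ (fun y => -((c y ^ 2)⁻¹ * (pd u 0 y * pd u 0 y))) x :=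
    (((hcd.pow 2).inv hc2ne).mul ((hψ 0).mul (hψ 0))).neg
  have hB : DifferentiableAt ℝ
      (fun y => pd u 1 y * pd u 1 y + (pd u 2 y * pd u 2 y + pd u 3 y * pd u 3 y)) x :=
    ((hψ 1).mul (hψ 1)).add (((hψ 2).mul (hψ 2)).add ((hψ 3).mul (hψ 3)))
  -- the key transport identity for second derivatives
  have hQ : ∀ β : Fin 4, pd (pd u β) 0 x
      = pd u 0 x * pd c β x / c x + c x ^ 2 * (pd u 0 x)⁻¹ *
          (pd u 1 x * pd (pd u β) 1 x + pd u 2 x * pd (pd u β) 2 x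
            + pd u 3 x * pd (pd u β) 3 x) := by
    intro β
    have h0 := pd_eqOn_zero hU hG0 hx β
    rw [pd_add hA hB β, pd_neg,
      pd_mul (show DifferentiableAt ℝ (fun y => (c y ^ 2)⁻¹) x from (hcd.pow 2).inv hc2ne)
        (show DifferentiableAt ℝ (fun y => pd u 0 y * pd u 0 y) x from (hψ 0).mul (hψ 0)) β,
      pd_inv (show DifferentiableAt ℝ (fun y => c y ^ 2) x from hcd.pow 2) hc2ne β, hc2 β, pd_mul (hψ 0) (hψ 0) β,
      pd_add (show DifferentiableAt ℝ (fun y => pd u 1 y * pd u 1 y) x from (hψ 1).mul (hψ 1))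
        (show DifferentiableAt ℝ (fun y => pd u 2 y * pd u 2 y + pd u 3 y * pd u 3 y) x from
          ((hψ 2).mul (hψ 2)).add ((hψ 3).mul (hψ 3))) β,
      pd_mul (hψ 1) (hψ 1) β,
      pd_add (show DifferentiableAt ℝ (fun y => pd u 2 y * pd u 2 y) x from (hψ 2).mul (hψ 2))
        (show DifferentiableAt ℝ (fun y => pd u 3 y * pd u 3 y) x from (hψ 3).mul (hψ 3)) β,
      pd_mul (hψ 2) (hψ 2) β, pd_mul (hψ 3) (hψ 3) β] at h0
    rw [pd_symm hux β 0, pd_symm hux β 1, pd_symm hux β 2, pd_symm hux β 3] at h0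
    field_simp at h0
    have h2 : (2 * c x ^ 3) * (pd (pd u β) 0 x * (c x * pd u 0 x))
        = (2 * c x ^ 3) * ((pd u 0 x) ^ 2 * pd c β x + c x ^ 3 *
            (pd u 1 x * pd (pd u β) 1 x + pd u 2 x * pd (pd u β) 2 x
              + pd u 3 x * pd (pd u β) 3 x)) := by
      linear_combination (-c x ^ 3) * h0
    have h3 := mul_left_cancel₀ (mul_ne_zero two_ne_zero (pow_ne_zero 3 hC)) h2
    have h4 : pd (pd u β) 0 x = ((pd u 0 x) ^ 2 * pd c β x + c x ^ 3 *
        (pd u 1 x * pd (pd u β) 1 x + pd u 2 x * pd (pd u β) 2 x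
          + pd u 3 x * pd (pd u β) 3 x)) * (c x * pd u 0 x)⁻¹ := by
      rw [eq_mul_inv_iff_mul_eq₀ (mul_ne_zero hC hP0)]
      linear_combination h3
    rw [h4]
    field_simp
  -- expansion of the derivative of Lⁱ
  have hLifun : (fun y => Lvec c u y i)
      = fun y => -((c y) ^ 2 * ((pd u 0 y)⁻¹ * pd u i y)) :=
    funext fun y => hLfun y i hi
  have epd : ∀ α, pd (fun y => Lvec c u y i) α x
      = -((pd c α x * c x + c x * pd c α x) * ((pd u 0 x)⁻¹ * pd u i x)
          + c x ^ 2 * (-pd (pd u 0) α x / pd u 0 x ^ 2 * pd u i x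
              + (pd u 0 x)⁻¹ * pd (pd u i) α x)) := by
    intro α
    rw [hLifun, pd_neg,
      pd_mul (show DifferentiableAt ℝ (fun y => c y ^ 2) x from hcd.pow 2)
        (show DifferentiableAt ℝ (fun y => (pd u 0 y)⁻¹ * pd u i y) x from
          ((hψ 0).inv hP0).mul (hψ i)) α, hc2 α,
      pd_mul (show DifferentiableAt ℝ (fun y => (pd u 0 y)⁻¹) x from (hψ 0).inv hP0) (hψ i) α,
      pd_inv (hψ 0) hP0 α]
  -- sum over the inverse metric row
  have hgsum : ∑ β, gInv c i β x * pd c β x = pd c i x := by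
    rw [Finset.sum_eq_single i]
    · simp [gInv, hi]
    · intro γ _ hγ
      simp [gInv, Ne.symm hγ]
    · simp
  have hsplit : ∑ β, ghat c u i β x * pd c β x
      = pd c i x + ∑ β, (2 * invDens c u x)⁻¹ *
          (Lvec c u x i * Lbar c u x β + Lbar c u x i * Lvec c u x β) * pd c β x := by
    simp only [ghat, add_mul, Finset.sum_add_distrib, hgsum]
  have hite0 : (if (0 : Fin 4) = 0 then (1:ℝ) else 0) = 1 := rfl
  have hite1 : (if (1 : Fin 4) = 0 then (1:ℝ) else 0) = 0 := rfl
  have hite2 : (if (2 : Fin 4) = 0 then (1:ℝ) else 0) = 0 := rfl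
  have hite3 : (if (3 : Fin 4) = 0 then (1:ℝ) else 0) = 0 := rfl
  have hitei : (if i = 0 then (1:ℝ) else 0) = 0 := if_neg hi
  rw [hsplit]
  simp only [vApp, Fin.sum_univ_four]
  rw [epd 0, epd 1, epd 2, epd 3, hQ 0, hQ i]
  simp only [Lbar, Tvec, That, ↓reduceIte, hite0, hite1, hite2, hite3, hitei, hmu x,
    hL0v, hL1v, hL2v, hL3v, hLiv]
  field_simp
  ring
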